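/- Fix h, h₁ > 0 with h₁ sufficiently small relative to h, and set ε_n = (h₁/h)Σ_{l=1}^n 1/l². For each odd positive integer k, there is exactly one positive integer n with h/k ∈ ((h - ε_n h)/n, (h - ε_{n-1} h)/(n-1)], namely n = k; consequently, among n restricted to odd integers, the indicator s(n,k) = χ_{((h-ε_n h)/n, (h-ε_{n-1}h)/(n-1)]}(h/k)·χ_{odd}(n) is nonzero only for n = k. -/

import Mathlib

lemma partial_basel (n : ℕ) :
    ∑ l ∈ Finset.Icc 1 n, (1 : ℝ) / (l : ℝ) ^ 2 ≤ Real.pi ^ 2 / 6 :=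
  sum_le_hasSum _ (fun i _ => by positivity) hasSum_zeta_two

/-- The "matching" argument: with `ε_n = (h₁/h)Σ_{l=1}^n 1/l²` and `h₁` sufficiently
small relative to `h` (for the given odd `k`), the condition
`n ∈ (k(1-ε_n), k(1-ε_{n-1})+1]` (equivalent to `h/k ∈ ((h-ε_n h)/n, (h-ε_{n-1}h)/(n-1)]`)
holds for exactly one positive integer `n`, namely `n = k`; in particular, among odd `n`
the indicator `s(n,k)` is nonzero only for `n = k`. -/
theorem roughness_matching
    (h h₁ : ℝ) (hh : 0 < h) (hh₁ : 0 < h₁)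
    (ε : ℕ → ℝ)
    (hε : ∀ n : ℕ, ε n = (h₁ / h) * ∑ l ∈ Finset.Icc 1 n, (1 : ℝ) / (l : ℝ) ^ 2)
    (k : ℕ) (hk : Odd k) (hk1 : 1 ≤ k)
    (hsmall : (k : ℝ) * (h₁ / h) * (Real.pi ^ 2 / 6) < 1 / 2) :
    ∀ n : ℕ, 1 ≤ n →
      (((k : ℝ) * (1 - ε n) < (n : ℝ) ∧ (n : ℝ) ≤ (k : ℝ) * (1 - ε (n - 1)) + 1) ↔ n = k) := by
  have hq : 0 < h₁ / h := div_pos hh₁ hh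
  have hεnonneg : ∀ m : ℕ, 0 ≤ ε m := fun m => by
    rw [hε]
    exact mul_nonneg hq.le (Finset.sum_nonneg fun i _ => by positivity)
  have hkε : ∀ m : ℕ, (k : ℝ) * ε m < 1 / 2 := by
    intro m
    calc (k : ℝ) * ε m ≤ (k : ℝ) * (h₁ / h) * (Real.pi ^ 2 / 6) := by
          rw [hε, ← mul_assoc]
          exact mul_le_mul_of_nonneg_left (partial_basel m)
            (mul_nonneg (Nat.cast_nonneg k) hq.le)
      _ < 1 / 2 := hsmall
  have hεpos : ∀ m : ℕ, 1 ≤ m → 0 < ε m := fun m hm => by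
    rw [hε]
    refine mul_pos hq (Finset.sum_pos (fun i hi => ?_) ⟨1, by simp [hm]⟩)
    simp only [Finset.mem_Icc] at hi
    have : 0 < (i : ℝ) := by exact_mod_cast hi.1
    positivity
  intro n hn
  constructor
  · rintro ⟨h1, h2⟩
    -- n > k - 1/2, so k ≤ n
    have hkn : k ≤ n := by
      have : (k : ℝ) - 1 / 2 < (n : ℝ) := by
        have := hkε n
        nlinarith
      by_contra hc
      push_neg at hc
      have : (n : ℝ) + 1 ≤ (k : ℝ) := by exact_mod_cast hc
      linarith
    -- n ≤ k + 1
    have hnk1 : n ≤ k + 1 := by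
      have : (n : ℝ) ≤ (k : ℝ) + 1 := by
        have h0 := hεnonneg (n - 1)
        nlinarith
      exact_mod_cast this
    rcases Nat.lt_or_ge n (k + 1) with hlt | hge
    · exact Nat.le_antisymm (Nat.lt_succ_iff.mp hlt) hkn
    · exfalso
      have hnk : n = k + 1 := Nat.le_antisymm hnk1 hge
      subst hnk
      have hek : 0 < ε k := hεpos k hk1
      have : (k : ℝ) + 1 ≤ (k : ℝ) * (1 - ε (k + 1 - 1)) + 1 := by
        push_cast at h2 ⊢; linarith
      simp only [Nat.add_sub_cancel] at this
      have hkpos : (0 : ℝ) < (k : ℝ) := by exact_mod_cast hk1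
      nlinarith
  · intro hnk
    subst hnk
    have hkpos : (0 : ℝ) < (n : ℝ) := by exact_mod_cast hn
    constructor
    · nlinarith [hεpos n hn]
    · nlinarith [hεnonneg (n - 1), hkε (n - 1)]
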